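/- Let V be a finite-dimensional ℚ-vector space and k a natural number with k ≤ dim V. Let GL(V) act diagonally by conjugation on the k-th tensor power (End V)^{⊗k}, i.e. g·(f₁ ⊗ … ⊗ f_k) = (g f₁ g⁻¹) ⊗ … ⊗ (g f_k g⁻¹), and let ((End V)^{⊗k})_{GL(V)} denote the coinvariants, i.e. the quotient of (End V)^{⊗k} by the subspace spanned by all elements x − g·x with g ∈ GL(V). Then there is a linear isomorphism ((End V)^{⊗k})_{GL(V)} ≅ ℚ[S_k] to the group algebra of the symmetric group S_k such that for every basis (e_i) of V and all permutations ω, σ ∈ S_k, the class of E_{ω(1),σ(1)} ⊗ … ⊗ E_{ω(k),σ(k)} is mapped to ω⁻¹σ, where E_{i,j} ∈ End V is the endomorphism sending e_j to e_i and all other basis vectors to 0. -/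

import Mathlib

open scoped TensorProduct

/-- The single-entry endomorphism `E_{i,j}` with respect to a basis `b`: it sends `b j` to
`b i` and all other basis vectors to `0`. -/
noncomputable def singleEntry {V : Type} [AddCommGroup V] [Module ℚ V] {n : ℕ}
    (b : Module.Basis (Fin n) ℚ V) (i j : Fin n) : Module.End ℚ V :=
  (b.coord j).smulRight (b i)

/-- The subspace of `(End V)^{⊗k}` spanned by the `GL(V)`-coinvariance relations `x - g·x`,
where `g ∈ GL(V)` acts diagonally by conjugation. -/
noncomputable def conjRelations (V : Type) [AddCommGroup V] [Module ℚ V] (k : ℕ) :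
    Submodule ℚ (⨂[ℚ] (_ : Fin k), Module.End ℚ V) :=
  Submodule.span ℚ
    {y | ∃ (g : V ≃ₗ[ℚ] V) (x : ⨂[ℚ] (_ : Fin k), Module.End ℚ V),
      y = x - PiTensorProduct.map (fun _ => (LinearEquiv.conj g).toLinearMap) x}



variable {V : Type} [AddCommGroup V] [Module ℚ V] {n : ℕ}

lemma singleEntry_apply (b : Module.Basis (Fin n) ℚ V) (i j : Fin n) (v : V) :
    singleEntry b i j v = b.repr v j • b i := rfl

lemma singleEntry_apply_basis (b : Module.Basis (Fin n) ℚ V) (i j m : Fin n) :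
    singleEntry b i j (b m) = if m = j then b i else 0 := by
  rw [singleEntry_apply, b.repr_self, Finsupp.single_apply]
  split <;> simp

lemma singleEntry_mul (b : Module.Basis (Fin n) ℚ V) (p q a c : Fin n) :
    singleEntry b p q * singleEntry b a c =
      if q = a then singleEntry b p c else 0 := by
  refine b.ext fun m => ?_
  rw [Module.End.mul_apply, singleEntry_apply_basis]
  by_cases hmc : m = c
  · subst hmc
    rw [if_pos rfl, singleEntry_apply_basis]
    by_cases hqa : q = a
    · subst hqa; rw [if_pos rfl, if_pos rfl, singleEntry_apply_basis, if_pos rfl]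
    · rw [if_neg (fun h => hqa h.symm), if_neg hqa, LinearMap.zero_apply]
  · rw [if_neg hmc, map_zero]
    split_ifs with h
    · rw [singleEntry_apply_basis, if_neg hmc]
    · rw [LinearMap.zero_apply]

lemma conj_singleEntry (b b' : Module.Basis (Fin n) ℚ V) (g : V ≃ₗ[ℚ] V)
    (hg : ∀ j, g (b j) = b' j) (i j : Fin n) :
    (LinearEquiv.conj g) (singleEntry b i j) = singleEntry b' i j := by
  have hsymm : ∀ m, g.symm (b' m) = b m := fun m => by
    rw [← hg m, LinearEquiv.symm_apply_apply]
  refine b'.ext fun m => ?_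
  rw [LinearEquiv.conj_apply]
  simp only [LinearMap.comp_apply, LinearEquiv.coe_coe]
  rw [hsymm, singleEntry_apply_basis, singleEntry_apply_basis]
  split_ifs with h
  · exact hg i
  · exact map_zero _

noncomputable def diagEquiv (b : Module.Basis (Fin n) ℚ V) (t : Fin n → ℚˣ) : V ≃ₗ[ℚ] V :=
  b.equiv (b.unitsSMul t) (Equiv.refl _)

lemma diagEquiv_apply_basis (b : Module.Basis (Fin n) ℚ V) (t : Fin n → ℚˣ) (m : Fin n) :
    diagEquiv b t (b m) = (t m : ℚ) • b m := by
  rw [diagEquiv, Module.Basis.equiv_apply, Equiv.refl_apply, Module.Basis.unitsSMul_apply, Units.smul_def]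

lemma diagEquiv_symm_apply_basis (b : Module.Basis (Fin n) ℚ V) (t : Fin n → ℚˣ) (m : Fin n) :
    (diagEquiv b t).symm (b m) = ((t m : ℚ))⁻¹ • b m := by
  rw [LinearEquiv.symm_apply_eq, map_smul, diagEquiv_apply_basis, smul_smul,
    inv_mul_cancel₀ (Units.ne_zero (t m)), one_smul]

lemma conj_diag_singleEntry (b : Module.Basis (Fin n) ℚ V) (t : Fin n → ℚˣ) (i j : Fin n) :
    (LinearEquiv.conj (diagEquiv b t)) (singleEntry b i j) =
      ((t i : ℚ) * ((t j : ℚ))⁻¹) • singleEntry b i j := by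
  refine b.ext fun m => ?_
  rw [LinearEquiv.conj_apply]
  simp only [LinearMap.comp_apply, LinearEquiv.coe_coe, LinearMap.smul_apply]
  rw [diagEquiv_symm_apply_basis, map_smul, singleEntry_apply_basis]
  by_cases h : m = j
  · subst h
    rw [if_pos rfl, map_smul, diagEquiv_apply_basis, smul_smul]
    congr 1
    ring
  · rw [if_neg h, smul_zero, map_zero, smul_zero]

lemma end_eq_sum_singleEntry (b : Module.Basis (Fin n) ℚ V) (f : Module.End ℚ V) :
    f = ∑ p : Fin n × Fin n, (b.repr (f (b p.2)) p.1) • singleEntry b p.1 p.2 := by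
  refine b.ext fun m => ?_
  rw [LinearMap.sum_apply, Fintype.sum_prod_type]
  have : ∀ p1 : Fin n, ∑ p2 : Fin n, ((b.repr (f (b p2)) p1) • singleEntry b p1 p2) (b m)
      = (b.repr (f (b m)) p1) • b p1 := by
    intro p1
    rw [Finset.sum_eq_single m]
    · rw [LinearMap.smul_apply, singleEntry_apply_basis, if_pos rfl]
    · intro p2 _ hne
      rw [LinearMap.smul_apply, singleEntry_apply_basis, if_neg (fun h => hne h.symm), smul_zero]
    · intro habs; exact absurd (Finset.mem_univ _) habs
  rw [Finset.sum_congr rfl fun p1 _ => this p1]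
  exact (b.sum_repr (f (b m))).symm

noncomputable def transvection (A : Module.End ℚ V) (s : ℚ) (hA : A * A = 0) : V ≃ₗ[ℚ] V :=
  LinearEquiv.ofLinear (1 + s • A) (1 - s • A)
    (by
      rw [← Module.End.mul_eq_comp]
      simp only [add_mul, sub_mul, mul_add, mul_sub, one_mul, mul_one, smul_mul_assoc,
        mul_smul_comm, smul_smul, hA, smul_zero]
      rw [show (LinearMap.id : V →ₗ[ℚ] V) = 1 from rfl, add_zero]; abel)
    (by
      rw [← Module.End.mul_eq_comp]
      simp only [add_mul, sub_mul, mul_add, mul_sub, one_mul, mul_one, smul_mul_assoc,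
        mul_smul_comm, smul_smul, hA, smul_zero]
      rw [show (LinearMap.id : V →ₗ[ℚ] V) = 1 from rfl, sub_zero]; abel)

lemma conj_transvection (A : Module.End ℚ V) (s : ℚ) (hA : A * A = 0) (f : Module.End ℚ V) :
    (LinearEquiv.conj (transvection A s hA)) f =
      f + s • (A * f - f * A) + (s * s) • (-(A * f * A)) := by
  rw [LinearEquiv.conj_apply]
  have h1 : ((transvection A s hA : V ≃ₗ[ℚ] V) : V →ₗ[ℚ] V) = 1 + s • A := rfl
  have h2 : (((transvection A s hA).symm : V ≃ₗ[ℚ] V) : V →ₗ[ℚ] V) = 1 - s • A := rfl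
  rw [h1, h2, ← Module.End.mul_eq_comp, ← Module.End.mul_eq_comp]
  simp only [add_mul, sub_mul, mul_add, mul_sub, one_mul, mul_one, smul_mul_assoc,
    mul_smul_comm, smul_smul, smul_sub, smul_add, smul_neg]
  abel

lemma poly_mem {X : Type*} [AddCommGroup X] [Module ℚ X] (R : Submodule ℚ X)
    (D : ℕ) (c : ℕ → X) (h : ∀ s : ℚ, (∑ m ∈ Finset.range D, s ^ m • c m) ∈ R) :
    ∀ m, m < D → c m ∈ R := by
  intro m hm
  set M : Matrix (Fin D) (Fin D) ℚ := Matrix.vandermonde (fun i => (i : ℚ)) with hM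
  have hdet : M.det ≠ 0 := by
    rw [hM, Matrix.det_vandermonde]
    refine Finset.prod_ne_zero_iff.2 fun i _ => Finset.prod_ne_zero_iff.2 fun j hj => ?_
    have h1 : (i:ℕ) < (j:ℕ) := Fin.lt_iff_val_lt_val.1 (Finset.mem_Ioi.1 hj)
    have h2 : ((i:ℕ):ℚ) < ((j:ℕ):ℚ) := by exact_mod_cast h1
    intro hc; rw [sub_eq_zero] at hc; exact absurd hc.symm (ne_of_lt h2)
  have hinv : M⁻¹ * M = 1 := Matrix.nonsing_inv_mul M hdet.isUnit
  have key : c m = ∑ s : Fin D, M⁻¹ ⟨m, hm⟩ s • ∑ j ∈ Finset.range D, ((s:ℕ):ℚ) ^ j • c j := by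
    have hsum : ∀ s : Fin D, (∑ j ∈ Finset.range D, ((s:ℕ):ℚ) ^ j • c j)
        = ∑ j : Fin D, M s j • c (j : ℕ) := by
      intro s
      rw [Finset.sum_range fun j => ((s:ℕ):ℚ) ^ j • c j]
      exact Finset.sum_congr rfl fun j _ => by rw [hM, Matrix.vandermonde_apply]
    calc c m = ∑ j : Fin D, (1 : Matrix (Fin D) (Fin D) ℚ) ⟨m, hm⟩ j • c (j:ℕ) := by
          rw [Finset.sum_eq_single (⟨m, hm⟩ : Fin D)]
          · rw [Matrix.one_apply_eq, one_smul]
          · intro b _ hb; rw [Matrix.one_apply_ne (Ne.symm hb), zero_smul]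
          · intro habs; exact absurd (Finset.mem_univ _) habs
      _ = ∑ j : Fin D, ((M⁻¹ * M) ⟨m, hm⟩ j) • c (j:ℕ) := by rw [hinv]
      _ = ∑ j : Fin D, ∑ s : Fin D, (M⁻¹ ⟨m, hm⟩ s * M s j) • c (j:ℕ) := by
          refine Finset.sum_congr rfl fun j _ => ?_
          rw [Matrix.mul_apply, Finset.sum_smul]
      _ = ∑ s : Fin D, ∑ j : Fin D, (M⁻¹ ⟨m, hm⟩ s * M s j) • c (j:ℕ) := Finset.sum_comm
      _ = ∑ s : Fin D, M⁻¹ ⟨m, hm⟩ s • ∑ j ∈ Finset.range D, ((s:ℕ):ℚ) ^ j • c j := by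
          refine Finset.sum_congr rfl fun s _ => ?_
          rw [hsum, Finset.smul_sum]
          exact Finset.sum_congr rfl fun j _ => (smul_smul _ _ _).symm
  rw [key]
  exact Submodule.sum_mem _ fun s _ => Submodule.smul_mem _ _ (h _)

/-! ### tau: invariant functionals -/

variable {k : ℕ}

noncomputable def entL (b : Module.Basis (Fin n) ℚ V) (r s : Fin n) : Module.End ℚ V →ₗ[ℚ] ℚ :=
  (b.coord r) ∘ₗ (LinearMap.applyₗ (b s))

lemma entL_apply (b : Module.Basis (Fin n) ℚ V) (r s : Fin n) (f : Module.End ℚ V) :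
    entL b r s f = b.repr (f (b s)) r := by
  simp [entL, Module.Basis.coord_apply, LinearMap.applyₗ]
  rfl

noncomputable def tauML (b : Module.Basis (Fin n) ℚ V) (π : Equiv.Perm (Fin k)) :
    MultilinearMap ℚ (fun _ : Fin k => Module.End ℚ V) ℚ :=
  ∑ j : Fin k → Fin n,
    (MultilinearMap.mkPiAlgebra ℚ (Fin k) ℚ).compLinearMap (fun i => entL b (j i) (j (π i)))

lemma tauML_apply (b : Module.Basis (Fin n) ℚ V) (π : Equiv.Perm (Fin k))
    (f : Fin k → Module.End ℚ V) :
    tauML b π f = ∑ j : Fin k → Fin n, ∏ i, b.repr ((f i) (b (j (π i)))) (j i) := by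
  rw [tauML, MultilinearMap.sum_apply]
  refine Finset.sum_congr rfl fun j _ => ?_
  simp [MultilinearMap.mkPiAlgebra_apply, entL_apply]

lemma tauML_matrix (b : Module.Basis (Fin n) ℚ V) (π : Equiv.Perm (Fin k))
    (f : Fin k → Module.End ℚ V) :
    tauML b π f = ∑ j : Fin k → Fin n, ∏ i,
      (LinearMap.toMatrix b b (f i)) (j i) (j (π i)) := by
  rw [tauML_apply]
  exact Finset.sum_congr rfl fun j _ => Finset.prod_congr rfl fun i _ => by
    rw [LinearMap.toMatrix_apply]

lemma tauML_conj (b : Module.Basis (Fin n) ℚ V) (π : Equiv.Perm (Fin k)) (g : V ≃ₗ[ℚ] V)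
    (f : Fin k → Module.End ℚ V) :
    tauML b π (fun i => (LinearEquiv.conj g) (f i)) = tauML b π f := by
  classical
  set G : Matrix (Fin n) (Fin n) ℚ := LinearMap.toMatrix b b g.toLinearMap with hG
  set G' : Matrix (Fin n) (Fin n) ℚ := LinearMap.toMatrix b b g.symm.toLinearMap with hG'
  have hG'G : G' * G = 1 := by
    rw [hG', hG, ← LinearMap.toMatrix_comp b b b]
    have h0 : (g.symm.toLinearMap ∘ₗ g.toLinearMap) = LinearMap.id := by
      ext v; simp
    rw [h0, LinearMap.toMatrix_id]
  set F : Fin k → Matrix (Fin n) (Fin n) ℚ := fun i => LinearMap.toMatrix b b (f i) with hF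
  have hconj : ∀ i, LinearMap.toMatrix b b ((LinearEquiv.conj g) (f i)) = G * F i * G' := by
    intro i
    rw [LinearEquiv.conj_apply, LinearMap.toMatrix_comp b b b, LinearMap.toMatrix_comp b b b]
  rw [tauML_matrix, tauML_matrix]
  have hentry : ∀ (Mx : Matrix (Fin n) (Fin n) ℚ) (r s : Fin n), (G * Mx * G') r s
      = ∑ p : Fin n × Fin n, G r p.1 * Mx p.1 p.2 * G' p.2 s := by
    intro Mx r s
    rw [Matrix.mul_apply, Fintype.sum_prod_type_right]
    refine Finset.sum_congr rfl fun p2 _ => ?_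
    rw [Matrix.mul_apply, Finset.sum_mul]
  have step1 : ∀ j : Fin k → Fin n, ∏ i, (LinearMap.toMatrix b b ((LinearEquiv.conj g) (f i))) (j i) (j (π i))
      = ∑ P ∈ Fintype.piFinset (fun _ : Fin k => (Finset.univ : Finset (Fin n × Fin n))),
          ∏ i, (G (j i) (P i).1 * F i (P i).1 (P i).2 * G' (P i).2 (j (π i))) := by
    intro j
    rw [Finset.prod_congr rfl fun i _ => by rw [hconj i, hentry]]
    exact Finset.prod_univ_sum _ _
  rw [Finset.sum_congr rfl fun j _ => step1 j, Finset.sum_comm]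
  have hinner : ∀ P : Fin k → Fin n × Fin n,
      (∑ j : Fin k → Fin n, ∏ i, (G (j i) (P i).1 * F i (P i).1 (P i).2 * G' (P i).2 (j (π i))))
      = (∏ i, F i (P i).1 (P i).2) *
          (if ∀ i, (P (π⁻¹ i)).2 = (P i).1 then 1 else 0) := by
    intro P
    have h1 : ∀ j : Fin k → Fin n,
        ∏ i, (G (j i) (P i).1 * F i (P i).1 (P i).2 * G' (P i).2 (j (π i)))
        = (∏ i, F i (P i).1 (P i).2) * ∏ i, (G' (P (π⁻¹ i)).2 (j i) * G (j i) (P i).1) := by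
      intro j
      have h2 : ∏ i, G' (P i).2 (j (π i)) = ∏ i, G' (P (π⁻¹ i)).2 (j i) := by
        rw [← Equiv.prod_comp π (fun i => G' (P (π⁻¹ i)).2 (j i))]
        exact Finset.prod_congr rfl fun i _ => by rw [Equiv.Perm.coe_inv, Equiv.symm_apply_apply]
      rw [Finset.prod_mul_distrib, Finset.prod_mul_distrib, h2, Finset.prod_mul_distrib]
      ring
    rw [Finset.sum_congr rfl fun j _ => h1 j, ← Finset.mul_sum]
    congr 1
    have : ∀ i : Fin k, (∑ w : Fin n, G' (P (π⁻¹ i)).2 w * G w (P i).1)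
        = (G' * G) (P (π⁻¹ i)).2 (P i).1 := fun i => (Matrix.mul_apply).symm
    calc (∑ j : Fin k → Fin n, ∏ i, (G' (P (π⁻¹ i)).2 (j i) * G (j i) (P i).1))
        = ∑ j ∈ Fintype.piFinset (fun _ : Fin k => (Finset.univ : Finset (Fin n))),
            ∏ i, (G' (P (π⁻¹ i)).2 (j i) * G (j i) (P i).1) := by rw [Fintype.piFinset_univ]
      _ = ∏ i, ∑ w : Fin n, G' (P (π⁻¹ i)).2 w * G w (P i).1 :=
            (Finset.prod_univ_sum (fun _ : Fin k => (Finset.univ : Finset (Fin n)))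
              (fun i w => G' (P (π⁻¹ i)).2 w * G w (P i).1)).symm
      _ = ∏ i, (G' * G) (P (π⁻¹ i)).2 (P i).1 := Finset.prod_congr rfl fun i _ => this i
      _ = ∏ i : Fin k, (1 : Matrix (Fin n) (Fin n) ℚ) (P (π⁻¹ i)).2 (P i).1 := by rw [hG'G]
      _ = ∏ i : Fin k, (if (P (π⁻¹ i)).2 = (P i).1 then 1 else 0) :=
            Finset.prod_congr rfl fun i _ => by rw [Matrix.one_apply]
      _ = (if ∀ i, (P (π⁻¹ i)).2 = (P i).1 then 1 else 0) := by
            simp [Finset.prod_boole]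
  rw [Fintype.piFinset_univ, Finset.sum_congr rfl fun P _ => hinner P]
  calc ∑ P : Fin k → Fin n × Fin n,
        (∏ i, F i (P i).1 (P i).2) * (if ∀ i, (P (π⁻¹ i)).2 = (P i).1 then 1 else 0)
      = ∑ P ∈ Finset.univ.filter (fun P : Fin k → Fin n × Fin n => ∀ i, (P (π⁻¹ i)).2 = (P i).1),
          ∏ i, F i (P i).1 (P i).2 := by
        rw [Finset.sum_filter]
        exact Finset.sum_congr rfl fun P _ => by rw [mul_ite, mul_one, mul_zero]
    _ = ∑ j : Fin k → Fin n, ∏ i, F i (j i) (j (π i)) := by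
        refine Finset.sum_nbij' (fun P => fun x => (P x).1) (fun U => fun x => (U x, U (π x)))
          ?_ ?_ ?_ ?_ ?_
        · intro P _; exact Finset.mem_univ _
        · intro U _
          refine Finset.mem_filter.2 ⟨Finset.mem_univ _, fun x => ?_⟩
          simp [Equiv.Perm.coe_inv]
        · intro P hP
          have hc := (Finset.mem_filter.1 hP).2
          funext x
          refine Prod.ext rfl ?_
          have := hc (π x)
          rw [Equiv.Perm.coe_inv, Equiv.symm_apply_apply] at this
          exact this.symm ▸ rfl
        · intro U _; rfl
        · intro P hP
          have hc := (Finset.mem_filter.1 hP).2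
          refine Finset.prod_congr rfl fun i _ => ?_
          have := hc (π i)
          rw [Equiv.Perm.coe_inv, Equiv.symm_apply_apply] at this
          rw [this]

lemma repr_singleEntry (b : Module.Basis (Fin n) ℚ V) (p q r s : Fin n) :
    b.repr (singleEntry b p q (b s)) r
      = (if s = q then 1 else 0) * (if r = p then 1 else 0) := by
  rw [singleEntry_apply_basis]
  by_cases h1 : s = q
  · rw [if_pos h1, if_pos h1, one_mul, Module.Basis.repr_self, Finsupp.single_apply]
    exact if_congr ⟨fun h => h.symm, fun h => h.symm⟩ rfl rfl
  · rw [if_neg h1, if_neg h1, zero_mul, map_zero]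
    simp

lemma tauML_singleEntry (b : Module.Basis (Fin n) ℚ V) (hn : k ≤ n) (ω σ π : Equiv.Perm (Fin k)) :
    tauML b π (fun i => singleEntry b (Fin.castLE hn (ω i)) (Fin.castLE hn (σ i)))
      = if π = ω⁻¹ * σ then 1 else 0 := by
  classical
  rw [tauML_apply]
  rw [Finset.sum_congr rfl fun j _ => Finset.prod_congr rfl fun i _ =>
    repr_singleEntry b (Fin.castLE hn (ω i)) (Fin.castLE hn (σ i)) (j i) (j (π i))]
  rw [Finset.sum_eq_single (fun i => Fin.castLE hn (ω i))]
  · have : ∀ i : Fin k,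
        ((if Fin.castLE hn (ω (π i)) = Fin.castLE hn (σ i) then (1:ℚ) else 0) *
          (if Fin.castLE hn (ω i) = Fin.castLE hn (ω i) then (1:ℚ) else 0))
        = (if ω (π i) = σ i then (1:ℚ) else 0) := by
      intro i
      rw [if_pos rfl, mul_one]
      exact if_congr (by rw [Fin.castLE_inj]) rfl rfl
    rw [Finset.prod_congr rfl fun i _ => this i]
    have hiff : (∀ i ∈ Finset.univ, ω (π i) = σ i) ↔ π = ω⁻¹ * σ := by
      constructor
      · intro h
        refine Equiv.ext fun i => ?_
        have := h i (Finset.mem_univ i)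
        rw [Equiv.Perm.mul_apply, ← this, Equiv.Perm.coe_inv, Equiv.symm_apply_apply]
      · intro h i _
        rw [h, Equiv.Perm.mul_apply, Equiv.Perm.coe_inv, Equiv.apply_symm_apply]
    simp only [Finset.prod_boole]
    simp only [hiff]
  · intro j _ hj
    have : ∃ i₀, j i₀ ≠ Fin.castLE hn (ω i₀) := by
      by_contra hcon
      push_neg at hcon
      exact hj (funext hcon)
    obtain ⟨i₀, hi₀⟩ := this
    refine Finset.prod_eq_zero (Finset.mem_univ i₀) ?_
    rw [if_neg hi₀, mul_zero]
  · intro h; exact absurd (Finset.mem_univ _) h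


lemma sub_conj_mem (g : V ≃ₗ[ℚ] V) (x : ⨂[ℚ] (_ : Fin k), Module.End ℚ V) :
    x - PiTensorProduct.map (fun _ => (LinearEquiv.conj g).toLinearMap) x
      ∈ conjRelations V k :=
  Submodule.subset_span ⟨g, x, rfl⟩

noncomputable def tauLin (b : Module.Basis (Fin n) ℚ V) :
    (⨂[ℚ] (_ : Fin k), Module.End ℚ V) →ₗ[ℚ] MonoidAlgebra ℚ (Equiv.Perm (Fin k)) :=
  ∑ π : Equiv.Perm (Fin k), (MonoidAlgebra.lsingle (R := ℚ) π) ∘ₗ (PiTensorProduct.lift (tauML b π))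

lemma tauLin_tprod (b : Module.Basis (Fin n) ℚ V) (f : Fin k → Module.End ℚ V) :
    tauLin b (PiTensorProduct.tprod ℚ f)
      = ∑ π : Equiv.Perm (Fin k), MonoidAlgebra.single π (tauML b π f) := by
  rw [tauLin, LinearMap.sum_apply]
  exact Finset.sum_congr rfl fun π _ => by
    rw [LinearMap.comp_apply, PiTensorProduct.lift.tprod]
    rfl

lemma tauLin_vanish (b : Module.Basis (Fin n) ℚ V) :
    conjRelations V k ≤ LinearMap.ker (tauLin (k := k) b) := by
  rw [conjRelations, Submodule.span_le]
  rintro y ⟨g, x, rfl⟩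
  rw [SetLike.mem_coe, LinearMap.mem_ker, map_sub]
  have : (tauLin (k := k) b) ∘ₗ (PiTensorProduct.map fun _ => (LinearEquiv.conj g).toLinearMap)
      = tauLin b := by
    apply PiTensorProduct.ext
    apply MultilinearMap.ext
    intro f
    rw [LinearMap.compMultilinearMap_apply, LinearMap.comp_apply, PiTensorProduct.map_tprod,
      LinearMap.compMultilinearMap_apply, tauLin_tprod, tauLin_tprod]
    exact Finset.sum_congr rfl fun π _ => congrArg (MonoidAlgebra.single π) (tauML_conj b π g f)
  calc tauLin b x - tauLin b (PiTensorProduct.map (fun _ => (LinearEquiv.conj g).toLinearMap) x)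
      = tauLin b x - ((tauLin b) ∘ₗ (PiTensorProduct.map fun _ => (LinearEquiv.conj g).toLinearMap)) x := rfl
    _ = 0 := by rw [this, sub_self]

lemma mem_of_scalar_rel (x : ⨂[ℚ] (_ : Fin k), Module.End ℚ V) (ρ : ℚ) (hρ : ρ ≠ 1)
    (h : x - ρ • x ∈ conjRelations V k) : x ∈ conjRelations V k := by
  have h2 : x = (1 - ρ)⁻¹ • (x - ρ • x) := by
    have hne : (1 - ρ) ≠ 0 := fun hc => hρ (by linarith [sub_eq_zero.1 hc])
    rw [smul_sub, smul_smul, ← sub_smul, ← mul_one_sub, inv_mul_cancel₀ hne, one_smul]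
  rw [h2]
  exact Submodule.smul_mem _ _ h

lemma conj_perm_singleEntry (b : Module.Basis (Fin n) ℚ V) (π : Equiv.Perm (Fin n)) (u v : Fin n) :
    (LinearEquiv.conj (b.equiv b π)) (singleEntry b u v) = singleEntry b (π u) (π v) := by
  have hsymm : ∀ m, (b.equiv b π).symm (b m) = b (π.symm m) := by
    intro m; rw [Module.Basis.equiv_symm, Module.Basis.equiv_apply]
  refine b.ext fun m => ?_
  rw [LinearEquiv.conj_apply]
  simp only [LinearMap.comp_apply, LinearEquiv.coe_coe]
  rw [hsymm, singleEntry_apply_basis, singleEntry_apply_basis]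
  by_cases h : m = π v
  · rw [if_pos h, if_pos (by rw [h, Equiv.symm_apply_apply]), Module.Basis.equiv_apply]
  · rw [if_neg h, if_neg (fun hc => h (by rw [← hc, Equiv.apply_symm_apply])), map_zero]

lemma deriv_mem (A : Module.End ℚ V) (hA : A * A = 0) (f : Fin k → Module.End ℚ V) :
    (∑ i : Fin k, PiTensorProduct.tprod ℚ (Function.update f i (A * f i - f i * A)))
      ∈ conjRelations V k := by
  classical
  rcases Nat.eq_zero_or_pos k with hk0 | hk0
  · subst hk0
    rw [show (Finset.univ : Finset (Fin 0)) = ∅ from rfl, Finset.sum_empty]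
    exact Submodule.zero_mem _
  set w : Fin k → Fin 3 → Module.End ℚ V :=
    fun i => ![f i, A * f i - f i * A, -(A * f i * A)] with hw
  have hwt : ∀ v : Fin k → Fin 3, (∑ i, ((v i : ℕ))) < 2 * k + 1 := by
    intro v
    have h1 : (∑ i, ((v i : ℕ))) ≤ ∑ _i : Fin k, 2 :=
      Finset.sum_le_sum fun i _ => Nat.lt_succ_iff.1 (v i).isLt
    have h2 : (∑ _i : Fin k, 2) = 2 * k := by
      rw [Finset.sum_const, Finset.card_univ, Fintype.card_fin, smul_eq_mul, mul_comm]
    omega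
  have expand : ∀ s : ℚ,
      PiTensorProduct.map (fun _ => (LinearEquiv.conj (transvection A s hA)).toLinearMap)
        (PiTensorProduct.tprod ℚ f)
      = ∑ v : Fin k → Fin 3,
          (s ^ (∑ i, ((v i : ℕ)))) • PiTensorProduct.tprod ℚ (fun i => w i (v i)) := by
    intro s
    rw [PiTensorProduct.map_tprod]
    have hslot : ∀ i : Fin k, (LinearEquiv.conj (transvection A s hA)) (f i)
        = ∑ t : Fin 3, s ^ ((t : ℕ)) • w i t := by
      intro i
      rw [conj_transvection, Fin.sum_univ_three]
      have h0 : ((0 : Fin 3) : ℕ) = 0 := rfl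
      have h1 : ((1 : Fin 3) : ℕ) = 1 := rfl
      have h2 : ((2 : Fin 3) : ℕ) = 2 := rfl
      rw [h0, h1, h2, pow_zero, pow_one, one_smul, pow_two]
      simp only [hw]
      norm_num [Matrix.cons_val_zero, Matrix.cons_val_one, Matrix.head_cons, Matrix.cons_val_two,
          Matrix.tail_cons, smul_neg]
    have hfun : (fun i => (LinearEquiv.conj (transvection A s hA)).toLinearMap (f i))
        = fun i => ∑ t ∈ (Finset.univ : Finset (Fin 3)), s ^ ((t : ℕ)) • w i t :=
      funext fun i => hslot i
    rw [hfun, MultilinearMap.map_sum_finset (PiTensorProduct.tprod ℚ), Fintype.piFinset_univ]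
    exact Finset.sum_congr rfl fun v _ => by
      rw [MultilinearMap.map_smul_univ, Finset.prod_pow_eq_pow_sum]
  set c : ℕ → (⨂[ℚ] (_ : Fin k), Module.End ℚ V) := fun m =>
    ∑ v ∈ Finset.univ.filter (fun v : Fin k → Fin 3 => (∑ i, ((v i : ℕ))) = m),
      PiTensorProduct.tprod ℚ (fun i => w i (v i)) with hc
  have hpoly : ∀ s : ℚ, (∑ m ∈ Finset.range (2 * k + 1),
      s ^ m • ((if m = 0 then PiTensorProduct.tprod ℚ f else 0) - c m)) ∈ conjRelations V k := by
    intro s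
    have heq : (∑ m ∈ Finset.range (2 * k + 1),
        s ^ m • ((if m = 0 then PiTensorProduct.tprod ℚ f else 0) - c m))
        = PiTensorProduct.tprod ℚ f -
          PiTensorProduct.map (fun _ => (LinearEquiv.conj (transvection A s hA)).toLinearMap)
            (PiTensorProduct.tprod ℚ f) := by
      rw [expand s]
      have hsplit : ∀ m ∈ Finset.range (2 * k + 1),
          s ^ m • ((if m = 0 then PiTensorProduct.tprod ℚ f else 0) - c m)
          = s ^ m • (if m = 0 then PiTensorProduct.tprod ℚ f else 0) - s ^ m • c m :=
        fun m _ => smul_sub _ _ _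
      rw [Finset.sum_congr rfl hsplit, Finset.sum_sub_distrib]
      congr 1
      · rw [Finset.sum_eq_single 0]
        · rw [if_pos rfl, pow_zero, one_smul]
        · intro m _ hm; rw [if_neg hm, smul_zero]
        · intro h; exact absurd (Finset.mem_range.2 (by omega)) h
      · rw [← Finset.sum_fiberwise_of_maps_to
            (g := fun v : Fin k → Fin 3 => ∑ i, ((v i : ℕ)))
            (fun v _ => Finset.mem_range.2 (hwt v))
            (fun v => (s ^ (∑ i, ((v i : ℕ)))) • PiTensorProduct.tprod ℚ (fun i => w i (v i)))]
        refine Finset.sum_congr rfl fun m _ => ?_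
        rw [hc, Finset.smul_sum]
        refine Finset.sum_congr rfl fun v hv => ?_
        rw [(Finset.mem_filter.1 hv).2]
    rw [heq]
    exact sub_conj_mem (transvection A s hA) _
  have hc1 : ((if 1 = 0 then PiTensorProduct.tprod ℚ f else 0) - c 1) ∈ conjRelations V k :=
    poly_mem _ (2 * k + 1) _ hpoly 1 (by omega)
  rw [if_neg one_ne_zero, zero_sub] at hc1
  have hc1' : c 1 ∈ conjRelations V k := by
    have := Submodule.neg_mem _ hc1
    rwa [neg_neg] at this
  have hfib : Finset.univ.filter (fun v : Fin k → Fin 3 => (∑ i, ((v i : ℕ))) = 1)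
      = Finset.univ.image (fun i₀ : Fin k => Function.update (fun _ => (0 : Fin 3)) i₀ 1) := by
    ext v
    simp only [Finset.mem_filter, Finset.mem_univ, true_and, Finset.mem_image]
    constructor
    · intro hv
      have hex : ∃ i₀, v i₀ ≠ 0 := by
        by_contra hcon
        push_neg at hcon
        have h0 : (∑ i, ((v i : ℕ))) = 0 :=
          Finset.sum_eq_zero fun i _ => by rw [hcon i]; rfl
        omega
      obtain ⟨i₀, hi₀⟩ := hex
      have hv1 : (v i₀ : ℕ) = 1 := by
        have hle : (v i₀ : ℕ) ≤ 1 := hv ▸ Finset.single_le_sum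
          (f := fun i => ((v i : ℕ))) (fun i _ => Nat.zero_le _) (Finset.mem_univ i₀)
        have hge : 1 ≤ (v i₀ : ℕ) := Nat.one_le_iff_ne_zero.2 (fun hc0 => hi₀ (Fin.ext hc0))
        omega
      refine ⟨i₀, ?_⟩
      funext x
      by_cases hx : x = i₀
      · subst hx; rw [Function.update_self]; exact (Fin.ext hv1).symm
      · rw [Function.update_of_ne hx]
        have hrest : (∑ i ∈ Finset.univ.erase i₀, ((v i : ℕ))) = 0 := by
          have hadd := Finset.add_sum_erase Finset.univ (fun i => ((v i : ℕ)))
            (Finset.mem_univ i₀)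
          omega
        have hx0 := Finset.sum_eq_zero_iff.1 hrest x (Finset.mem_erase.2 ⟨hx, Finset.mem_univ x⟩)
        exact (Fin.ext hx0).symm
    · rintro ⟨i₀, rfl⟩
      rw [Finset.sum_eq_single i₀]
      · rw [Function.update_self]; rfl
      · intro i _ hi; rw [Function.update_of_ne hi]; rfl
      · intro h; exact absurd (Finset.mem_univ _) h
  have himg_inj : Set.InjOn (fun i₀ : Fin k => Function.update (fun _ => (0 : Fin 3)) i₀ 1)
      ↑(Finset.univ : Finset (Fin k)) := by
    intro i₀ _ i₁ _ h
    by_contra hne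
    have h0 := congrFun h i₀
    simp only [Function.update_self, Function.update_of_ne hne] at h0
    exact absurd h0 (by decide)
  have hkey : c 1 = ∑ i : Fin k,
      PiTensorProduct.tprod ℚ (Function.update f i (A * f i - f i * A)) := by
    rw [show c 1 = ∑ v ∈ Finset.univ.filter
        (fun v : Fin k → Fin 3 => (∑ i, ((v i : ℕ))) = 1),
        PiTensorProduct.tprod ℚ (fun i => w i (v i)) from rfl]
    rw [hfib, Finset.sum_image himg_inj]
    refine Finset.sum_congr rfl fun i₀ _ => ?_
    congr 1
    funext i
    by_cases hx : i = i₀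
    · subst hx
      simp only [Function.update_self]
      simp [hw]
    · simp only [Function.update_of_ne hx]
      simp [hw]
  rw [← hkey]
  exact hc1'

noncomputable def xiFun (b : Module.Basis (Fin n) ℚ V) (hn : k ≤ n) (σ : Equiv.Perm (Fin k)) :
    ⨂[ℚ] (_ : Fin k), Module.End ℚ V :=
  PiTensorProduct.tprod ℚ (fun i => singleEntry b (Fin.castLE hn i) (Fin.castLE hn (σ i)))

lemma prod_ite_eq_pow (r : ℚ) (d : Fin k → Fin n) (v : Fin n) :
    (∏ i : Fin k, if d i = v then r else 1)
      = r ^ (Finset.univ.filter (fun i => d i = v)).card := by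
  rw [← Finset.prod_filter_mul_prod_filter_not Finset.univ (fun i => d i = v)]
  rw [Finset.prod_congr rfl (fun i hi => if_pos (Finset.mem_filter.1 hi).2),
    Finset.prod_congr rfl (fun i hi => if_neg (Finset.mem_filter.1 hi).2),
    Finset.prod_const, Finset.prod_const, one_pow, mul_one]

lemma diag_rel (b : Module.Basis (Fin n) ℚ V) (a c : Fin k → Fin n) (v : Fin n)
    (hcount : (Finset.univ.filter (fun i => a i = v)).card
      ≠ (Finset.univ.filter (fun i => c i = v)).card) :
    PiTensorProduct.tprod ℚ (fun i => singleEntry b (a i) (c i)) ∈ conjRelations V k := by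
  classical
  set Na := (Finset.univ.filter (fun i => a i = v)).card with hNa
  set Nc := (Finset.univ.filter (fun i => c i = v)).card with hNc
  set u2 : ℚˣ := Units.mk0 2 two_ne_zero with hu2
  set t : Fin n → ℚˣ := fun j => if j = v then u2 else 1 with ht
  have htval : ∀ j, ((t j : ℚ)) = if j = v then 2 else 1 := by
    intro j
    rw [ht]
    by_cases h : j = v <;> simp [h, hu2]
  have htinv : ∀ j, ((t j : ℚ))⁻¹ = if j = v then (2:ℚ)⁻¹ else 1 := by
    intro j
    rw [htval j]
    by_cases h : j = v <;> simp [h]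
  set ρ : ℚ := 2 ^ Na * ((2:ℚ) ^ Nc)⁻¹ with hρdef
  have hρ : ρ ≠ 1 := by
    intro h1
    rw [hρdef, mul_inv_eq_one₀ (pow_ne_zero _ two_ne_zero)] at h1
    have h2 : ((2 ^ Na : ℕ) : ℚ) = ((2 ^ Nc : ℕ) : ℚ) := by push_cast; exact h1
    exact hcount (Nat.pow_right_injective (le_refl 2) (Nat.cast_injective h2))
  refine mem_of_scalar_rel _ ρ hρ ?_
  have hmap : PiTensorProduct.map (fun _ => (LinearEquiv.conj (diagEquiv b t)).toLinearMap)
      (PiTensorProduct.tprod ℚ (fun i => singleEntry b (a i) (c i)))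
      = ρ • PiTensorProduct.tprod ℚ (fun i => singleEntry b (a i) (c i)) := by
    rw [PiTensorProduct.map_tprod]
    have hfac : (fun i => (LinearEquiv.conj (diagEquiv b t)).toLinearMap
        (singleEntry b (a i) (c i)))
        = fun i => ((t (a i) : ℚ) * ((t (c i) : ℚ))⁻¹) • singleEntry b (a i) (c i) :=
      funext fun i => conj_diag_singleEntry b t (a i) (c i)
    rw [hfac, MultilinearMap.map_smul_univ]
    congr 1
    rw [Finset.prod_mul_distrib]
    rw [Finset.prod_congr rfl (fun i _ => htval (a i)),
      Finset.prod_congr rfl (fun i _ => htinv (c i)), prod_ite_eq_pow, prod_ite_eq_pow,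
      inv_pow, ← hNa, ← hNc, hρdef]
  have := sub_conj_mem (diagEquiv b t)
    (PiTensorProduct.tprod ℚ (fun i => singleEntry b (a i) (c i)))
  rwa [hmap] at this

lemma inj_case (b : Module.Basis (Fin n) ℚ V) (hn : k ≤ n) (a c : Fin k → Fin n)
    (ha : Function.Injective a) :
    PiTensorProduct.tprod ℚ (fun i => singleEntry b (a i) (c i))
      ∈ conjRelations V k ⊔ Submodule.span ℚ (Set.range (xiFun b hn)) := by
  classical
  by_cases hmult : ∀ v : Fin n, (Finset.univ.filter (fun i => a i = v)).card
      = (Finset.univ.filter (fun i => c i = v)).card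
  · -- c injective, range c ⊆ range a; use permutation conjugation
    have hc_inj : Function.Injective c := by
      intro i j hij
      by_contra hne
      have h2 : 1 < (Finset.univ.filter (fun x => c x = c i)).card :=
        Finset.one_lt_card.2 ⟨i, Finset.mem_filter.2 ⟨Finset.mem_univ _, rfl⟩,
          j, Finset.mem_filter.2 ⟨Finset.mem_univ _, hij.symm⟩, hne⟩
      have h1 : (Finset.univ.filter (fun x => a x = c i)).card ≤ 1 :=
        Finset.card_le_one.2 (fun x hx y hy =>
          ha ((Finset.mem_filter.1 hx).2.trans (Finset.mem_filter.1 hy).2.symm))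
      rw [← hmult (c i)] at h2
      omega
    have hrange : ∀ i, ∃ j, a j = c i := by
      intro i
      have hne0 : (Finset.univ.filter (fun x => a x = c i)).card ≠ 0 := by
        rw [hmult (c i)]
        exact Finset.card_ne_zero_of_mem (Finset.mem_filter.2 ⟨Finset.mem_univ _, rfl⟩)
      obtain ⟨j, hj⟩ := Finset.card_pos.1 (Nat.pos_of_ne_zero hne0)
      exact ⟨j, (Finset.mem_filter.1 hj).2⟩
    have hcast_inj : Function.Injective (Fin.castLE hn) := Fin.castLE_injective hn
    let e1 : ↥(Set.range a) ≃ ↥(Set.range (Fin.castLE hn)) :=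
      (Equiv.ofInjective a ha).symm.trans (Equiv.ofInjective _ hcast_inj)
    have hcard : Fintype.card ↥(Set.range a)ᶜ = Fintype.card ↥(Set.range (Fin.castLE hn))ᶜ := by
      rw [Fintype.card_compl_set, Fintype.card_compl_set, Set.card_range_of_injective ha,
        Set.card_range_of_injective hcast_inj]
    let e2 : ↥(Set.range a)ᶜ ≃ ↥(Set.range (Fin.castLE hn))ᶜ := Fintype.equivOfCardEq hcard
    let π : Equiv.Perm (Fin n) :=
      ((Equiv.Set.sumCompl (Set.range a)).symm.trans ((e1.sumCongr e2).trans
        (Equiv.Set.sumCompl (Set.range (Fin.castLE hn)))))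
    have hπa : ∀ i, π (a i) = Fin.castLE hn i := by
      intro i
      show (Equiv.Set.sumCompl (Set.range (Fin.castLE hn)))
        ((e1.sumCongr e2) ((Equiv.Set.sumCompl (Set.range a)).symm (a i))) = _
      rw [Equiv.Set.sumCompl_symm_apply_of_mem (Set.mem_range_self i)]
      have he1 : e1 ⟨a i, Set.mem_range_self i⟩ = ⟨Fin.castLE hn i, Set.mem_range_self i⟩ := by
        show (Equiv.ofInjective _ hcast_inj) ((Equiv.ofInjective a ha).symm ⟨a i, _⟩) = _
        rw [show (⟨a i, Set.mem_range_self i⟩ : ↥(Set.range a))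
            = Equiv.ofInjective a ha i from rfl]
        rw [Equiv.symm_apply_apply]
        rfl
      rw [Equiv.sumCongr_apply, Sum.map_inl, he1, Equiv.Set.sumCompl_apply_inl]
    have hσval : ∀ i : Fin k, ((π (c i) : Fin n) : ℕ) < k := by
      intro i
      obtain ⟨j, hj⟩ := hrange i
      rw [← hj, hπa j]
      exact j.isLt
    set σfun : Fin k → Fin k := fun i => ⟨((π (c i) : Fin n) : ℕ), hσval i⟩ with hσfun
    have hσinj : Function.Injective σfun := by
      intro i j hij
      apply hc_inj
      apply π.injective
      have hval := congrArg Fin.val hij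
      exact Fin.ext hval
    let σ : Equiv.Perm (Fin k) := Equiv.ofBijective σfun (Finite.injective_iff_bijective.1 hσinj)
    have hπc : ∀ i, π (c i) = Fin.castLE hn (σ i) := by
      intro i
      exact Fin.ext rfl
    have hmap : PiTensorProduct.map (fun _ => (LinearEquiv.conj (b.equiv b π)).toLinearMap)
        (PiTensorProduct.tprod ℚ (fun i => singleEntry b (a i) (c i))) = xiFun b hn σ := by
      rw [PiTensorProduct.map_tprod, xiFun]
      exact congrArg _ (funext fun i => by
        show (LinearEquiv.conj (b.equiv b π)) (singleEntry b (a i) (c i)) = _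
        rw [conj_perm_singleEntry, hπa, hπc])
    have hx : PiTensorProduct.tprod ℚ (fun i => singleEntry b (a i) (c i))
        = (PiTensorProduct.tprod ℚ (fun i => singleEntry b (a i) (c i))
            - PiTensorProduct.map (fun _ => (LinearEquiv.conj (b.equiv b π)).toLinearMap)
              (PiTensorProduct.tprod ℚ (fun i => singleEntry b (a i) (c i))))
          + xiFun b hn σ := by
      rw [hmap]; abel
    rw [hx]
    exact Submodule.add_mem _
      (Submodule.mem_sup_left (sub_conj_mem _ _))
      (Submodule.mem_sup_right (Submodule.subset_span ⟨σ, rfl⟩))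
  · push_neg at hmult
    obtain ⟨v, hv⟩ := hmult
    exact Submodule.mem_sup_left (diag_rel b a c v hv)

lemma tensor_mem (b : Module.Basis (Fin n) ℚ V) (hn : k ≤ n) : ∀ (m : ℕ) (a c : Fin k → Fin n),
    k ≤ (Finset.univ.image a).card + m →
    PiTensorProduct.tprod ℚ (fun i => singleEntry b (a i) (c i))
      ∈ conjRelations V k ⊔ Submodule.span ℚ (Set.range (xiFun b hn)) := by
  classical
  intro m
  induction m with
  | zero =>
    intro a c hcard
    have hk : (Finset.univ : Finset (Fin k)).card = k := by
      rw [Finset.card_univ, Fintype.card_fin]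
    have himle : (Finset.univ.image a).card ≤ k := le_trans Finset.card_image_le (le_of_eq hk)
    have ha : Function.Injective a := by
      have heq : (Finset.univ.image a).card = (Finset.univ : Finset (Fin k)).card := by omega
      have hinj := Finset.card_image_iff.1 heq
      intro x y hxy
      exact hinj (Finset.mem_coe.2 (Finset.mem_univ x)) (Finset.mem_coe.2 (Finset.mem_univ y)) hxy
    exact inj_case b hn a c ha
  | succ m ih =>
    intro a c hcard
    by_cases ha : Function.Injective a
    · exact inj_case b hn a c ha
    · obtain ⟨i₁, i₂, heq12, hne12⟩ := Function.not_injective_iff.1 ha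
      have hk : (Finset.univ : Finset (Fin k)).card = k := by
        rw [Finset.card_univ, Fintype.card_fin]
      have himlt : (Finset.univ.image a).card < n := by
        have hle : (Finset.univ.image a).card ≤ k := le_trans Finset.card_image_le (le_of_eq hk)
        have hne' : (Finset.univ.image a).card ≠ k := by
          intro hca
          apply ha
          have hinj := Finset.card_image_iff.1 (hca.trans hk.symm)
          intro x y hxy
          exact hinj (Finset.mem_coe.2 (Finset.mem_univ x)) (Finset.mem_coe.2 (Finset.mem_univ y)) hxy
        omega
      obtain ⟨q, hq⟩ : ∃ q : Fin n, q ∉ Finset.univ.image a := by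
        by_contra hcon
        push_neg at hcon
        have huniv : (Finset.univ : Finset (Fin n)) ⊆ Finset.univ.image a :=
          fun x _ => hcon x
        have := Finset.card_le_card huniv
        rw [Finset.card_univ, Fintype.card_fin] at this
        omega
      set p := a i₁ with hp
      set cvec : Fin k → Fin n := Function.update a i₁ q with hcvec
      have hcvec_i₁ : cvec i₁ = q := Function.update_self i₁ q a
      have hcvec_ne : ∀ i, i ≠ i₁ → cvec i = a i := fun i hi => Function.update_of_ne hi q a
      have hpq : p ≠ q := by
        intro hc
        exact hq (hc ▸ Finset.mem_image_of_mem a (Finset.mem_univ i₁))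
      set A := singleEntry b p q with hAdef
      have hA : A * A = 0 := by
        rw [hAdef, singleEntry_mul, if_neg (fun hc => hpq hc.symm)]
      set fE : Fin k → Module.End ℚ V := fun i => singleEntry b (cvec i) (c i) with hfE
      have hder := deriv_mem A hA fE
      have hsplit : ∀ i : Fin k,
          PiTensorProduct.tprod ℚ (Function.update fE i (A * fE i - fE i * A))
          = (if q = cvec i then
              PiTensorProduct.tprod ℚ (Function.update fE i (singleEntry b p (c i))) else 0)
            - (if c i = p then
              PiTensorProduct.tprod ℚ (Function.update fE i (singleEntry b (cvec i) q)) else 0) := by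
        intro i
        have hAf : A * fE i = if q = cvec i then singleEntry b p (c i) else 0 := by
          rw [hAdef, hfE, singleEntry_mul]
        have hfA : fE i * A = if c i = p then singleEntry b (cvec i) q else 0 := by
          rw [hAdef, hfE, singleEntry_mul]
        rw [hAf, hfA]
        by_cases h1 : q = cvec i <;> by_cases h2 : c i = p
        · rw [if_pos h1, if_pos h2, if_pos h1, if_pos h2]
          exact (PiTensorProduct.tprod ℚ).map_update_sub _ _ _ _
        · rw [if_pos h1, if_neg h2, if_pos h1, if_neg h2, sub_zero, sub_zero]
        · rw [if_neg h1, if_pos h2, if_neg h1, if_pos h2, zero_sub, zero_sub]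
          have := (PiTensorProduct.tprod ℚ).map_update_sub fE i 0 (singleEntry b (cvec i) q)
          rw [zero_sub, MultilinearMap.map_update_zero, zero_sub] at this
          exact this
        · rw [if_neg h1, if_neg h2, if_neg h1, if_neg h2, sub_zero, sub_zero,
            MultilinearMap.map_update_zero]
      rw [Finset.sum_congr rfl (fun i _ => hsplit i), Finset.sum_sub_distrib] at hder
      have hfirst : (∑ i : Fin k, if q = cvec i then
          PiTensorProduct.tprod ℚ (Function.update fE i (singleEntry b p (c i))) else 0)
          = PiTensorProduct.tprod ℚ (fun i => singleEntry b (a i) (c i)) := by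
        rw [Finset.sum_eq_single i₁]
        · rw [if_pos hcvec_i₁.symm]
          congr 1
          funext i
          by_cases hi : i = i₁
          · subst hi
            rw [Function.update_self]
          · rw [Function.update_of_ne hi, hfE]
            simp only []
            rw [hcvec_ne i hi]
        · intro i _ hi
          rw [if_neg (fun hc => hq (by
            rw [hcvec_ne i hi] at hc
            exact hc ▸ Finset.mem_image_of_mem a (Finset.mem_univ i)))]
        · intro habs
          exact absurd (Finset.mem_univ _) habs
      rw [hfirst] at hder
      have hsecond : (∑ i : Fin k, if c i = p then
          PiTensorProduct.tprod ℚ (Function.update fE i (singleEntry b (cvec i) q)) else 0)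
          ∈ conjRelations V k ⊔ Submodule.span ℚ (Set.range (xiFun b hn)) := by
        refine Submodule.sum_mem _ fun i _ => ?_
        by_cases hci : c i = p
        · rw [if_pos hci]
          have hform : Function.update fE i (singleEntry b (cvec i) q)
              = fun j => singleEntry b (cvec j) (Function.update c i q j) := by
            funext j
            by_cases hji : j = i
            · subst hji
              rw [Function.update_self, Function.update_self]
            · rw [Function.update_of_ne hji, Function.update_of_ne hji, hfE]
          rw [hform]
          refine ih cvec (Function.update c i q) ?_
          have hsub : insert q (Finset.univ.image a) ⊆ Finset.univ.image cvec := by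
            intro x hx
            rcases Finset.mem_insert.1 hx with hxq | hxa
            · subst hxq
              exact hcvec_i₁ ▸ Finset.mem_image_of_mem cvec (Finset.mem_univ i₁)
            · obtain ⟨j, _, hj⟩ := Finset.mem_image.1 hxa
              by_cases hj1 : j = i₁
              · subst hj1
                have : cvec i₂ = x := by rw [hcvec_ne i₂ (fun hc => hne12 hc.symm), ← heq12, hp, hj]
                exact this ▸ Finset.mem_image_of_mem cvec (Finset.mem_univ i₂)
              · have : cvec j = x := by rw [hcvec_ne j hj1, hj]
                exact this ▸ Finset.mem_image_of_mem cvec (Finset.mem_univ j)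
          have hcards : (Finset.univ.image a).card + 1 ≤ (Finset.univ.image cvec).card := by
            have h1 := Finset.card_le_card hsub
            rw [Finset.card_insert_of_notMem hq] at h1
            exact h1
          omega
        · rw [if_neg hci]
          exact Submodule.zero_mem _
      have hx : PiTensorProduct.tprod ℚ (fun i => singleEntry b (a i) (c i))
          = (PiTensorProduct.tprod ℚ (fun i => singleEntry b (a i) (c i))
              - (∑ i : Fin k, if c i = p then
                PiTensorProduct.tprod ℚ (Function.update fE i (singleEntry b (cvec i) q)) else 0))
            + (∑ i : Fin k, if c i = p then
                PiTensorProduct.tprod ℚ (Function.update fE i (singleEntry b (cvec i) q)) else 0) := by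
        abel
      rw [hx]
      exact Submodule.add_mem _ (Submodule.mem_sup_left hder) hsecond

lemma span_top (b : Module.Basis (Fin n) ℚ V) (hn : k ≤ n) :
    conjRelations V k ⊔ Submodule.span ℚ (Set.range (xiFun b hn)) = ⊤ := by
  classical
  rw [eq_top_iff, ← PiTensorProduct.span_tprod_eq_top, Submodule.span_le]
  rintro x ⟨f, rfl⟩
  have hexp : PiTensorProduct.tprod ℚ f
      = ∑ P ∈ Fintype.piFinset (fun _ : Fin k => (Finset.univ : Finset (Fin n × Fin n))),
          (∏ i, b.repr (f i (b (P i).2)) (P i).1) •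
            PiTensorProduct.tprod ℚ (fun i => singleEntry b (P i).1 (P i).2) := by
    have hfi : f = fun i => ∑ p : Fin n × Fin n,
        (b.repr (f i (b p.2)) p.1) • singleEntry b p.1 p.2 :=
      funext fun i => end_eq_sum_singleEntry b (f i)
    conv_lhs => rw [hfi]
    rw [MultilinearMap.map_sum_finset (PiTensorProduct.tprod ℚ)]
    exact Finset.sum_congr rfl fun P _ => MultilinearMap.map_smul_univ _ _ _
  rw [hexp]
  refine Submodule.sum_mem _ fun P _ => Submodule.smul_mem _ _ ?_
  exact tensor_mem b hn k (fun i => (P i).1) (fun i => (P i).2) (Nat.le_add_left k _)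

/-- fundamental theorem of coinvariant theory: for `k ≤ dim V` there is a linear
isomorphism `((End V)^{⊗k})_{GL(V)} ≅ ℚ[S_k]` sending, for every basis of `V` and all
`ω, σ ∈ S_k`, the class of `E_{ω(1),σ(1)} ⊗ ⋯ ⊗ E_{ω(k),σ(k)}` to `ω⁻¹σ`. -/
theorem stmt_7 (V : Type) [AddCommGroup V] [Module ℚ V] [FiniteDimensional ℚ V]
    (k : ℕ) (hk : k ≤ Module.finrank ℚ V) :
    ∃ e : ((⨂[ℚ] (_ : Fin k), Module.End ℚ V) ⧸ conjRelations V k) ≃ₗ[ℚ]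
        MonoidAlgebra ℚ (Equiv.Perm (Fin k)),
      ∀ (n : ℕ) (hn : k ≤ n) (b : Module.Basis (Fin n) ℚ V) (ω σ : Equiv.Perm (Fin k)),
        e (Submodule.Quotient.mk (PiTensorProduct.tprod ℚ
            (fun i => singleEntry b (Fin.castLE hn (ω i)) (Fin.castLE hn (σ i))))) =
          MonoidAlgebra.of ℚ (Equiv.Perm (Fin k)) (ω⁻¹ * σ) := by
  classical
  set n₀ := Module.finrank ℚ V with hn₀
  let b₀ : Module.Basis (Fin n₀) ℚ V := Module.finBasis ℚ V
  have hvan := tauLin_vanish (k := k) b₀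
  set tauQ : ((⨂[ℚ] (_ : Fin k), Module.End ℚ V) ⧸ conjRelations V k) →ₗ[ℚ]
      MonoidAlgebra ℚ (Equiv.Perm (Fin k)) := Submodule.liftQ _ (tauLin b₀) hvan with htauQ
  set xiL : MonoidAlgebra ℚ (Equiv.Perm (Fin k)) →ₗ[ℚ]
      ((⨂[ℚ] (_ : Fin k), Module.End ℚ V) ⧸ conjRelations V k) :=
    Finsupp.linearCombination ℚ
      (fun σ => Submodule.Quotient.mk (xiFun b₀ hk σ)) ∘ₗ
        (MonoidAlgebra.coeffLinearEquiv ℚ).toLinearMap with hxiL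
  have hxiL_single : ∀ (σ : Equiv.Perm (Fin k)) (r : ℚ),
      xiL (MonoidAlgebra.single σ r) = r • Submodule.Quotient.mk (xiFun b₀ hk σ) := by
    intro σ r
    rw [hxiL]
    apply Finsupp.linearCombination_single
  have htauML1 : ∀ (hn : k ≤ n₀) (ω σ π : Equiv.Perm (Fin k)),
      tauML b₀ π (fun i => singleEntry b₀ (Fin.castLE hn (ω i)) (Fin.castLE hn (σ i)))
        = if π = ω⁻¹ * σ then 1 else 0 := fun hn ω σ π => tauML_singleEntry b₀ hn ω σ π
  have htau_tprod : ∀ (hn : k ≤ n₀) (ω σ : Equiv.Perm (Fin k)),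
      tauLin b₀ (PiTensorProduct.tprod ℚ
        (fun i => singleEntry b₀ (Fin.castLE hn (ω i)) (Fin.castLE hn (σ i))))
      = MonoidAlgebra.single (ω⁻¹ * σ) 1 := by
    intro hn ω σ
    rw [tauLin_tprod]
    rw [Finset.sum_congr rfl (fun π _ => congrArg (MonoidAlgebra.single π) (htauML1 hn ω σ π))]
    rw [Finset.sum_eq_single (ω⁻¹ * σ)]
    · rw [if_pos rfl]
    · intro π _ hπ
      rw [if_neg hπ, MonoidAlgebra.single_zero]
    · intro h; exact absurd (Finset.mem_univ _) h
  have htau_xi : ∀ σ : Equiv.Perm (Fin k),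
      tauQ (Submodule.Quotient.mk (xiFun b₀ hk σ)) = MonoidAlgebra.single σ 1 := by
    intro σ
    rw [htauQ, Submodule.liftQ_apply]
    have h1 : xiFun b₀ hk σ = PiTensorProduct.tprod ℚ
        (fun i => singleEntry b₀ (Fin.castLE hk ((1 : Equiv.Perm (Fin k)) i))
          (Fin.castLE hk (σ i))) := rfl
    rw [h1, htau_tprod hk 1 σ, inv_one, one_mul]
  have hcomp1 : tauQ ∘ₗ xiL = LinearMap.id := by
    refine MonoidAlgebra.lhom_ext' fun σ => LinearMap.ext fun r => ?_
    show tauQ (xiL (MonoidAlgebra.single σ r)) = MonoidAlgebra.single σ r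
    rw [hxiL_single, map_smul, htau_xi σ, MonoidAlgebra.smul_single, smul_eq_mul, mul_one]
  have hxiL_surj : Function.Surjective xiL := by
    intro y
    obtain ⟨x, hx⟩ := Submodule.Quotient.mk_surjective _ y
    have hxmem : x ∈ conjRelations V k ⊔ Submodule.span ℚ (Set.range (xiFun b₀ hk)) := by
      rw [span_top b₀ hk]; trivial
    obtain ⟨r, hr, z, hz, hsum⟩ := Submodule.mem_sup.1 hxmem
    obtain ⟨cf, hcf⟩ := (Submodule.mem_span_range_iff_exists_fun ℚ).1 hz
    refine ⟨∑ σ : Equiv.Perm (Fin k), MonoidAlgebra.single σ (cf σ), ?_⟩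
    have h1 : xiL (∑ σ : Equiv.Perm (Fin k), MonoidAlgebra.single σ (cf σ))
        = (conjRelations V k).mkQ (∑ σ : Equiv.Perm (Fin k), cf σ • xiFun b₀ hk σ) := by
      rw [map_sum, map_sum]
      refine Finset.sum_congr rfl fun σ _ => ?_
      rw [hxiL_single, map_smul, Submodule.mkQ_apply]
    rw [h1, hcf, ← hx, show Submodule.Quotient.mk x = (conjRelations V k).mkQ x from rfl,
      ← hsum, map_add, Submodule.mkQ_apply, Submodule.mkQ_apply,
      (Submodule.Quotient.mk_eq_zero _).2 hr, zero_add]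
  have hcomp2 : xiL ∘ₗ tauQ = LinearMap.id := by
    apply LinearMap.ext
    intro y
    obtain ⟨w, rfl⟩ := hxiL_surj y
    have h := LinearMap.congr_fun hcomp1 w
    rw [LinearMap.comp_apply] at h
    rw [LinearMap.comp_apply, h]
    simp only [LinearMap.id_coe, id_eq]
  refine ⟨LinearEquiv.ofLinear tauQ xiL hcomp1 hcomp2, ?_⟩
  intro n hn b ω σ
  have hnn : n₀ = n := by
    rw [hn₀, Module.finrank_eq_card_basis b, Fintype.card_fin]
  subst hnn
  have hg : ∀ j, (b₀.equiv b (Equiv.refl _)) (b₀ j) = b j := fun j => by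
    rw [Module.Basis.equiv_apply, Equiv.refl_apply]
  have hmap : PiTensorProduct.map
      (fun _ => (LinearEquiv.conj (b₀.equiv b (Equiv.refl _))).toLinearMap)
      (PiTensorProduct.tprod ℚ
        (fun i => singleEntry b₀ (Fin.castLE hn (ω i)) (Fin.castLE hn (σ i))))
      = PiTensorProduct.tprod ℚ
        (fun i => singleEntry b (Fin.castLE hn (ω i)) (Fin.castLE hn (σ i))) := by
    rw [PiTensorProduct.map_tprod]
    exact congrArg _ (funext fun i => conj_singleEntry b₀ b _ hg _ _)
  have hclass : Submodule.Quotient.mk (p := conjRelations V k) (PiTensorProduct.tprod ℚ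
        (fun i => singleEntry b (Fin.castLE hn (ω i)) (Fin.castLE hn (σ i))))
      = Submodule.Quotient.mk (PiTensorProduct.tprod ℚ
        (fun i => singleEntry b₀ (Fin.castLE hn (ω i)) (Fin.castLE hn (σ i)))) := by
    rw [Submodule.Quotient.eq, ← hmap]
    have h2 := Submodule.neg_mem _ (sub_conj_mem (b₀.equiv b (Equiv.refl _))
      (PiTensorProduct.tprod ℚ
        (fun i => singleEntry b₀ (Fin.castLE hn (ω i)) (Fin.castLE hn (σ i)))))
    rwa [neg_sub] at h2
  rw [hclass, LinearEquiv.ofLinear_apply, htauQ, Submodule.liftQ_apply, htau_tprod hn ω σ]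
  rfl
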